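/- A nested-sequent of MB+ is valid if and only if the MB+-formula τ of it is valid, where τ(Γ⇒Δ) = ⋀Γ → ⋁Δ and τ(Γ⇒Δ, [T₁]^{d₁}_{α₁}, …, [Tₙ]^{dₙ}_{αₙ}) = (⋀Γ → ⋁Δ) ∨ □^{d₁}_{α₁} τ(T₁) ∨ … ∨ □^{dₙ}_{αₙ} τ(Tₙ) with dᵢ ∈ {=, o, c} as allowed in MB+. -/

import Mathlib

set_option maxHeartbeats 1000000

namespace MBQL

/-- The fixed finite set `J ⊆ [0,1]` of inner-product values, with `0, 1 ∈ J`. -/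
structure MBParams where
  J : Set ℝ
  finite : J.Finite
  subI : J ⊆ Set.Icc (0:ℝ) 1
  zero_mem : (0:ℝ) ∈ J
  one_mem : (1:ℝ) ∈ J

/-- Formulas of **MB+**: generated from variables, `⊤`, `⊥` by `¬`, `∧` and
the modalities `□^=_α` (`α ∈ J`, `0 < α ≤ 1`), `□^o_α` (`α ∈ J`) and `□^c_0`. -/
inductive MBPForm (Pm : MBParams) : Type
  | var : ℕ → MBPForm Pm
  | top : MBPForm Pm
  | bot : MBPForm Pm
  | neg : MBPForm Pm → MBPForm Pm
  | conj : MBPForm Pm → MBPForm Pm → MBPForm Pm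
  | boxe : (α : ℝ) → α ∈ Pm.J → 0 < α → MBPForm Pm → MBPForm Pm
  | boxo : (α : ℝ) → α ∈ Pm.J → MBPForm Pm → MBPForm Pm
  | boxc0 : MBPForm Pm → MBPForm Pm

noncomputable instance {Pm : MBParams} : DecidableEq (MBPForm Pm) := Classical.decEq _

/-- Valuation of an MB+-formula, given worlds `S`, a relation `R` and a
valuation `V` of the propositional variables. -/
def MBPForm.valR {Pm : MBParams} {S : Type} (R : S → S → ℝ) (V : ℕ → Set S) :
    MBPForm Pm → Set S
  | .var n => V n
  | .top => Set.univ
  | .bot => ∅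
  | .neg A => (A.valR R V)ᶜ
  | .conj A B => A.valR R V ∩ B.valR R V
  | .boxe α _ _ A => {s | ∀ u, R s u = α → u ∈ A.valR R V}
  | .boxo α _ A => {s | ∀ u, α < R s u → u ∈ A.valR R V}
  | .boxc0 A => {s | ∀ u, u ∈ A.valR R V}

/-- An EQL-frame. -/
structure EQLFrame where
  S : Type
  nonempty : Nonempty S
  R : S → S → ℝ
  mem_Icc : ∀ s t, R s t ∈ Set.Icc (0:ℝ) 1
  eq_one_iff : ∀ s t, (R s t = 1 ↔ s = t)
  symm : ∀ s t, R s t = R t s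

/-- An MB-realization for the language of MB+. -/
structure MBPRealization (Pm : MBParams) where
  F : EQLFrame
  P : Set (Set F.S)
  univ_mem : Set.univ ∈ P
  empty_mem : ∅ ∈ P
  inter_mem : ∀ X ∈ P, ∀ Y ∈ P, X ∩ Y ∈ P
  compl_mem : ∀ X ∈ P, Xᶜ ∈ P
  boxe_mem : ∀ α ∈ Pm.J, 0 < α → ∀ X ∈ P, {s | ∀ u, F.R s u = α → u ∈ X} ∈ P
  boxo_mem : ∀ α ∈ Pm.J, ∀ X ∈ P, {s | ∀ u, α < F.R s u → u ∈ X} ∈ P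
  boxc0_mem : ∀ X ∈ P, {s | ∀ u, u ∈ X} ∈ P
  V : ℕ → Set F.S
  V_mem : ∀ n, V n ∈ P

/-- The extended valuation in an MB+-realization. -/
def MBPRealization.val {Pm : MBParams} (M : MBPRealization Pm) (A : MBPForm Pm) :
    Set M.F.S := A.valR M.F.R M.V

/-- Validity of an MB+-formula. -/
def MBPValid {Pm : MBParams} (A : MBPForm Pm) : Prop :=
  ∀ (M : MBPRealization Pm) (s : M.F.S), s ∈ M.val A

/-- Bracket labels for nested-sequents of MB+: `[·]^=_α` (`0 < α ≤ 1`),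
`[·]^o_α` (`α ≠ 1`) and `[·]^c_0`. -/
inductive PLab (Pm : MBParams) : Type
  | eq : (α : ℝ) → α ∈ Pm.J → 0 < α → PLab Pm
  | o : (α : ℝ) → α ∈ Pm.J → α ≠ 1 → PLab Pm
  | c0 : PLab Pm

mutual
/-- Nested-sequents of MB+. -/
inductive PNSeq (Pm : MBParams) : Type
  | node : Finset (MBPForm Pm) → Finset (MBPForm Pm) → PNSeqs Pm → PNSeq Pm
/-- A finite list of labelled child nested-sequents of MB+. -/
inductive PNSeqs (Pm : MBParams) : Type
  | nil : PNSeqs Pm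
  | cons : PLab Pm → PNSeq Pm → PNSeqs Pm → PNSeqs Pm
end

/-- The `i`-th labelled child. -/
def PNSeqs.get {Pm : MBParams} : PNSeqs Pm → ℕ → Option (PLab Pm × PNSeq Pm)
  | .nil, _ => none
  | .cons l t _, 0 => some (l, t)
  | .cons _ _ ts, n+1 => ts.get n

/-- `PSubAt t p u`: the subtree of `t` at the node address `p` is `u`. -/
inductive PSubAt {Pm : MBParams} : PNSeq Pm → List ℕ → PNSeq Pm → Prop
  | here (t : PNSeq Pm) : PSubAt t [] t
  | there {Γ Δ : Finset (MBPForm Pm)} {ts : PNSeqs Pm} {i : ℕ} {l : PLab Pm}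
      {u v : PNSeq Pm} {p : List ℕ} :
      PNSeqs.get ts i = some (l, u) → PSubAt u p v → PSubAt (.node Γ Δ ts) (i :: p) v

mutual
/-- Replace the sequent at the node with address `p` by `Γ' ⇒ Δ'`. -/
def PNSeq.setSeq {Pm : MBParams} :
    PNSeq Pm → List ℕ → Finset (MBPForm Pm) → Finset (MBPForm Pm) → PNSeq Pm
  | .node _ _ ts, [], Γ', Δ' => .node Γ' Δ' ts
  | .node Γ Δ ts, i :: p, Γ', Δ' => .node Γ Δ (PNSeqs.setSeqs ts i p Γ' Δ')
def PNSeqs.setSeqs {Pm : MBParams} :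
    PNSeqs Pm → ℕ → List ℕ → Finset (MBPForm Pm) → Finset (MBPForm Pm) → PNSeqs Pm
  | .nil, _, _, _, _ => .nil
  | .cons l t ts, 0, p, Γ', Δ' => .cons l (t.setSeq p Γ' Δ') ts
  | .cons l t ts, n+1, p, Γ', Δ' => .cons l t (PNSeqs.setSeqs ts n p Γ' Δ')
end

/-- Append a labelled child at the end of a children list. -/
def PNSeqs.snoc {Pm : MBParams} : PNSeqs Pm → PLab Pm → PNSeq Pm → PNSeqs Pm
  | .nil, l, u => .cons l u .nil
  | .cons l' t ts, l, u => .cons l' t (ts.snoc l u)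

mutual
/-- Add a new child `[u]_l` at the node with address `p`. -/
def PNSeq.addChild {Pm : MBParams} : PNSeq Pm → List ℕ → PLab Pm → PNSeq Pm → PNSeq Pm
  | .node Γ Δ ts, [], l, u => .node Γ Δ (ts.snoc l u)
  | .node Γ Δ ts, i :: p, l, u => .node Γ Δ (PNSeqs.addChilds ts i p l u)
def PNSeqs.addChilds {Pm : MBParams} :
    PNSeqs Pm → ℕ → List ℕ → PLab Pm → PNSeq Pm → PNSeqs Pm
  | .nil, _, _, _, _ => .nil
  | .cons l' t ts, 0, p, l, u => .cons l' (t.addChild p l u) ts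
  | .cons l' t ts, n+1, p, l, u => .cons l' t (PNSeqs.addChilds ts n p l u)
end

/-- `A ∨ B`. -/
def MBPForm.or {Pm : MBParams} (A B : MBPForm Pm) : MBPForm Pm :=
  .neg (.conj (.neg A) (.neg B))

/-- `A → B := ¬A ∨ B`. -/
def MBPForm.imp {Pm : MBParams} (A B : MBPForm Pm) : MBPForm Pm := (MBPForm.neg A).or B

/-- Conjunction of a list of formulas. -/
def pconjList {Pm : MBParams} : List (MBPForm Pm) → MBPForm Pm
  | [] => .top
  | [A] => A
  | A :: B :: rest => .conj A (pconjList (B :: rest))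

/-- Disjunction of a list of formulas. -/
def pdisjList {Pm : MBParams} : List (MBPForm Pm) → MBPForm Pm
  | [] => .bot
  | [A] => A
  | A :: B :: rest => (A).or (pdisjList (B :: rest))

/-- `⋀Γ → ⋁Δ`. -/
noncomputable def pseqForm {Pm : MBParams} (Γ Δ : Finset (MBPForm Pm)) : MBPForm Pm :=
  (pconjList Γ.toList).imp (pdisjList Δ.toList)

/-- The box corresponding to a bracket label of MB+. -/
def PLab.box {Pm : MBParams} : PLab Pm → MBPForm Pm → MBPForm Pm
  | .eq α h h0, A => .boxe α h h0 A
  | .o α h _, A => .boxo α h A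
  | .c0, A => .boxc0 A

mutual
/-- The interpretation `τ` of an MB+ nested-sequent as an MB+-formula. -/
noncomputable def PNSeq.tau {Pm : MBParams} : PNSeq Pm → MBPForm Pm
  | .node Γ Δ ts => PNSeqs.tauAux (pseqForm Γ Δ) ts
noncomputable def PNSeqs.tauAux {Pm : MBParams} : MBPForm Pm → PNSeqs Pm → MBPForm Pm
  | A, .nil => A
  | A, .cons l t ts => PNSeqs.tauAux (A.or (l.box t.tau)) ts
end

/-- The condition imposed on `R(E(n₁), E(n₂))` by a bracket label of MB+. -/
def PLabCond {Pm : MBParams} (l : PLab Pm) (r : ℝ) : Prop :=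
  match l with
  | .eq α _ _ => r = α
  | .o α _ _ => α < r
  | .c0 => True

/-- `E` is an embedding of the MB+ nested-sequent `t` into `M`. -/
def PIsEmb {Pm : MBParams} (M : MBPRealization Pm) (t : PNSeq Pm)
    (E : List ℕ → M.F.S) : Prop :=
  ∀ p Γ Δ ts i l u, PSubAt t p (.node Γ Δ ts) → PNSeqs.get ts i = some (l, u) →
    PLabCond l (M.F.R (E p) (E (p ++ [i])))

/-- The MB+ nested-sequent `t` is false in `M` under `E`. -/
def PFalseUnder {Pm : MBParams} (M : MBPRealization Pm) (t : PNSeq Pm)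
    (E : List ℕ → M.F.S) : Prop :=
  ∀ p Γ Δ ts, PSubAt t p (.node Γ Δ ts) →
    (∀ A ∈ Γ, E p ∈ M.val A) ∧ (∀ A ∈ Δ, E p ∉ M.val A)

/-- Validity of an MB+ nested-sequent. -/
def PNSValid {Pm : MBParams} (t : PNSeq Pm) : Prop :=
  ∀ (M : MBPRealization Pm) (E : List ℕ → M.F.S), PIsEmb M t E → ¬ PFalseUnder M t E

/-- Descriptors of the left-rule boxes `□^=_α`, `□^o_α` of MB+. -/
inductive PBox (Pm : MBParams) : Type
  | e : (α : ℝ) → α ∈ Pm.J → 0 < α → PBox Pm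
  | o : (α : ℝ) → α ∈ Pm.J → PBox Pm

/-- The box formula corresponding to a box descriptor. -/
def PBox.box {Pm : MBParams} : PBox Pm → MBPForm Pm → MBPForm Pm
  | .e α h h0, A => .boxe α h h0 A
  | .o α h, A => .boxo α h A

/-- Side condition of the rules (□L), (□L sym) of NSMB+:
`(d = d' = "=" and α = β)`, or `(d = d' = o and α < β)`, or
`(d = o, d' = "=" and α < β)`. -/
def PC1 {Pm : MBParams} : PBox Pm → PLab Pm → Prop
  | .e α _ _, .eq β _ _ => α = β
  | .o α _, .o β _ _ => α < β
  | .o α _, .eq β _ _ => α < β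
  | _, _ => False

/-- Side condition of the rule (□L self) of NSMB+:
`(d = "=" and α = 1)` or `(d = o and α ≠ 1)`. -/
def PC2 {Pm : MBParams} : PBox Pm → Prop
  | .e α _ _ => α = 1
  | .o α _ => α ≠ 1

/-- Provability in the nested-sequent calculus **NSMB+**; the boolean records
whether (cut) may be used. -/
inductive PProvable {Pm : MBParams} : Bool → PNSeq Pm → Prop
  /-- axiom `‖A, Γ ⇒ Δ, A, T‖` -/
  | axId {cut : Bool} {t : PNSeq Pm} {p Γ Δ ts A} :
      PSubAt t p (.node Γ Δ ts) → A ∈ Γ → A ∈ Δ → PProvable cut t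
  /-- axiom `‖Γ ⇒ Δ, ⊤, T‖` -/
  | axTop {cut : Bool} {t : PNSeq Pm} {p Γ Δ ts} :
      PSubAt t p (.node Γ Δ ts) → MBPForm.top ∈ Δ → PProvable cut t
  /-- axiom `‖⊥, Γ ⇒ Δ, T‖` -/
  | axBot {cut : Bool} {t : PNSeq Pm} {p Γ Δ ts} :
      PSubAt t p (.node Γ Δ ts) → MBPForm.bot ∈ Γ → PProvable cut t
  /-- axiom `‖Γ ⇒ Δ, □^o_1 A, T‖` -/
  | axBoxO1 {cut : Bool} {t : PNSeq Pm} {p Γ Δ ts A} :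
      PSubAt t p (.node Γ Δ ts) → MBPForm.boxo 1 Pm.one_mem A ∈ Δ → PProvable cut t
  /-- rule (cut) -/
  | cutR {t : PNSeq Pm} {p Γ Δ ts A} :
      PSubAt t p (.node Γ Δ ts) →
      PProvable true (t.setSeq p Γ (insert A Δ)) →
      PProvable true (t.setSeq p (insert A Γ) Δ) →
      PProvable true t
  /-- rule (wL) -/
  | wL {cut : Bool} {t : PNSeq Pm} {p Γ Δ ts A} :
      PSubAt t p (.node Γ Δ ts) → PProvable cut t →
      PProvable cut (t.setSeq p (insert A Γ) Δ)
  /-- rule (wR) -/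
  | wR {cut : Bool} {t : PNSeq Pm} {p Γ Δ ts A} :
      PSubAt t p (.node Γ Δ ts) → PProvable cut t →
      PProvable cut (t.setSeq p Γ (insert A Δ))
  /-- rule (¬L) -/
  | negL {cut : Bool} {t : PNSeq Pm} {p Γ Δ ts A} :
      PSubAt t p (.node Γ Δ ts) →
      PProvable cut (t.setSeq p Γ (insert A Δ)) →
      PProvable cut (t.setSeq p (insert (MBPForm.neg A) Γ) Δ)
  /-- rule (¬R) -/
  | negR {cut : Bool} {t : PNSeq Pm} {p Γ Δ ts A} :
      PSubAt t p (.node Γ Δ ts) →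
      PProvable cut (t.setSeq p (insert A Γ) Δ) →
      PProvable cut (t.setSeq p Γ (insert (MBPForm.neg A) Δ))
  /-- rule (∧L) -/
  | andL {cut : Bool} {t : PNSeq Pm} {p Γ Δ ts A B} :
      PSubAt t p (.node Γ Δ ts) →
      PProvable cut (t.setSeq p (insert A (insert B Γ)) Δ) →
      PProvable cut (t.setSeq p (insert (MBPForm.conj A B) Γ) Δ)
  /-- rule (∧R) -/
  | andR {cut : Bool} {t : PNSeq Pm} {p Γ Δ ts A B} :
      PSubAt t p (.node Γ Δ ts) →
      PProvable cut (t.setSeq p Γ (insert A Δ)) →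
      PProvable cut (t.setSeq p Γ (insert B Δ)) →
      PProvable cut (t.setSeq p Γ (insert (MBPForm.conj A B) Δ))
  /-- rule (□L) of NSMB+ -/
  | boxL {cut : Bool} {t : PNSeq Pm} {p Γ Δ ts i l u Γ' Δ' ts' A} {b : PBox Pm} :
      PSubAt t p (.node Γ Δ ts) → PNSeqs.get ts i = some (l, u) →
      PSubAt t (p ++ [i]) (.node Γ' Δ' ts') →
      PC1 b l →
      PProvable cut (t.setSeq (p ++ [i]) (insert A Γ') Δ') →
      PProvable cut (t.setSeq p (insert (b.box A) Γ) Δ)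
  /-- rule (□L sym) of NSMB+ -/
  | boxLsym {cut : Bool} {t : PNSeq Pm} {p Γ Δ ts i l u Γ' Δ' ts' A} {b : PBox Pm} :
      PSubAt t p (.node Γ Δ ts) → PNSeqs.get ts i = some (l, u) →
      PSubAt t (p ++ [i]) (.node Γ' Δ' ts') →
      PC1 b l →
      PProvable cut (t.setSeq p (insert A Γ) Δ) →
      PProvable cut (t.setSeq (p ++ [i]) (insert (b.box A) Γ') Δ')
  /-- rule (□L self) of NSMB+ -/
  | boxLself {cut : Bool} {t : PNSeq Pm} {p Γ Δ ts A} {b : PBox Pm} :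
      PSubAt t p (.node Γ Δ ts) → PC2 b →
      PProvable cut (t.setSeq p (insert A Γ) Δ) →
      PProvable cut (t.setSeq p (insert (b.box A) Γ) Δ)
  /-- rule (□^c_0) -/
  | boxC0 {cut : Bool} {t : PNSeq Pm} {p Γ Δ ts q Γ'' Δ'' ts'' A} :
      PSubAt t p (.node Γ Δ ts) → PSubAt t q (.node Γ'' Δ'' ts'') →
      PProvable cut (t.setSeq p (insert A Γ) Δ) →
      PProvable cut (t.setSeq q (insert (MBPForm.boxc0 A) Γ'') Δ'')
  /-- rule (□R) -/
  | boxR {cut : Bool} {t : PNSeq Pm} {p Γ Δ ts A} {l : PLab Pm} :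
      PSubAt t p (.node Γ Δ ts) →
      PProvable cut (t.addChild p l (.node ∅ {A} .nil)) →
      PProvable cut (t.setSeq p Γ (insert (l.box A) Δ))
  /-- rule (= R self) -/
  | eqRself {cut : Bool} {t : PNSeq Pm} {p Γ Δ ts A} :
      PSubAt t p (.node Γ Δ ts) →
      PProvable cut (t.setSeq p Γ (insert A Δ)) →
      PProvable cut (t.setSeq p Γ (insert (MBPForm.boxe 1 Pm.one_mem one_pos A) Δ))


section Aux

variable {Pm : MBParams}

lemma valR_or {S : Type} (R : S → S → ℝ) (V : ℕ → Set S) (A B : MBPForm Pm) (s : S) :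
    s ∈ (A.or B).valR R V ↔ s ∈ A.valR R V ∨ s ∈ B.valR R V := by
  simp [MBPForm.or, MBPForm.valR]; tauto

lemma mem_pconjList {S : Type} (R : S → S → ℝ) (V : ℕ → Set S) (s : S) :
    ∀ L : List (MBPForm Pm), s ∈ (pconjList L).valR R V ↔ ∀ A ∈ L, s ∈ A.valR R V
  | [] => by simp [pconjList, MBPForm.valR]
  | [A] => by simp [pconjList]
  | A :: B :: rest => by
      rw [show pconjList (A :: B :: rest) = .conj A (pconjList (B :: rest)) from rfl]
      simp only [MBPForm.valR, Set.mem_inter_iff,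
        mem_pconjList R V s (B :: rest), List.mem_cons]
      constructor
      · rintro ⟨h1, h2⟩ C (rfl | hC)
        · exact h1
        · exact h2 C hC
      · intro h
        exact ⟨h A (Or.inl rfl), fun C hC => h C (Or.inr hC)⟩

lemma mem_pdisjList {S : Type} (R : S → S → ℝ) (V : ℕ → Set S) (s : S) :
    ∀ L : List (MBPForm Pm), s ∈ (pdisjList L).valR R V ↔ ∃ A ∈ L, s ∈ A.valR R V
  | [] => by simp [pdisjList, MBPForm.valR]
  | [A] => by simp [pdisjList]
  | A :: B :: rest => by
      rw [show pdisjList (A :: B :: rest) = A.or (pdisjList (B :: rest)) from rfl,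
        valR_or, mem_pdisjList R V s (B :: rest)]
      constructor
      · rintro (h | ⟨C, hC, hCs⟩)
        · exact ⟨A, List.mem_cons_self, h⟩
        · exact ⟨C, List.mem_cons_of_mem _ hC, hCs⟩
      · rintro ⟨C, hC, hCs⟩
        rcases List.mem_cons.mp hC with rfl | hC
        · exact Or.inl hCs
        · exact Or.inr ⟨C, hC, hCs⟩

lemma mem_pseqForm {S : Type} (R : S → S → ℝ) (V : ℕ → Set S) (s : S)
    (Γ Δ : Finset (MBPForm Pm)) :
    s ∈ (pseqForm Γ Δ).valR R V ↔
      ((∀ A ∈ Γ, s ∈ A.valR R V) → ∃ A ∈ Δ, s ∈ A.valR R V) := by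
  rw [show pseqForm Γ Δ = (MBPForm.neg (pconjList Γ.toList)).or (pdisjList Δ.toList) from rfl,
    valR_or, mem_pdisjList]
  simp only [MBPForm.valR, Set.mem_compl_iff, mem_pconjList]
  constructor
  · rintro (h | ⟨C, hC, hCs⟩) hΓ
    · exact absurd (fun A hA => hΓ A (Finset.mem_toList.mp hA)) h
    · exact ⟨C, Finset.mem_toList.mp hC, hCs⟩
  · intro h
    by_cases hΓ : ∀ A ∈ Γ, s ∈ A.valR R V
    · obtain ⟨C, hC, hCs⟩ := h hΓ
      exact Or.inr ⟨C, Finset.mem_toList.mpr hC, hCs⟩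
    · left
      intro hall
      exact hΓ (fun A hA => hall A (Finset.mem_toList.mpr hA))

lemma mem_tauAux {S : Type} (R : S → S → ℝ) (V : ℕ → Set S) :
    ∀ (ts : PNSeqs Pm) (A : MBPForm Pm) (s : S),
      s ∈ (PNSeqs.tauAux A ts).valR R V ↔
        s ∈ A.valR R V ∨
          ∃ i l v, PNSeqs.get ts i = some (l, v) ∧ s ∈ ((PLab.box l v.tau)).valR R V
  | .nil, A, s => by
      rw [PNSeqs.tauAux]
      simp [PNSeqs.get]
  | .cons l t ts, A, s => by
      rw [PNSeqs.tauAux, mem_tauAux R V ts _ s, valR_or]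
      constructor
      · rintro ((h | h) | ⟨i, l', v, hget, hv⟩)
        · exact Or.inl h
        · exact Or.inr ⟨0, l, t, rfl, h⟩
        · exact Or.inr ⟨i + 1, l', v, hget, hv⟩
      · rintro (h | ⟨i, l', v, hget, hv⟩)
        · exact Or.inl (Or.inl h)
        · match i, hget with
          | 0, hget =>
              obtain ⟨rfl, rfl⟩ : l = l' ∧ t = v := by
                simpa [PNSeqs.get] using hget
              exact Or.inl (Or.inr hv)
          | i + 1, hget => exact Or.inr ⟨i, l', v, hget, hv⟩

lemma box_false {M : MBPRealization Pm} {l : PLab Pm} {B : MBPForm Pm} {s : M.F.S}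
    (h : s ∉ M.val (l.box B)) :
    ∃ w, PLabCond l (M.F.R s w) ∧ w ∉ M.val B := by
  cases l with
  | eq α hα h0 =>
      simp only [PLab.box, MBPRealization.val, MBPForm.valR, Set.mem_setOf_eq] at h
      push_neg at h
      exact h
  | o α hα h1 =>
      simp only [PLab.box, MBPRealization.val, MBPForm.valR, Set.mem_setOf_eq] at h
      push_neg at h
      exact h
  | c0 =>
      simp only [PLab.box, MBPRealization.val, MBPForm.valR, Set.mem_setOf_eq] at h
      push_neg at h
      obtain ⟨w, hw⟩ := h
      exact ⟨w, trivial, hw⟩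

lemma box_true {M : MBPRealization Pm} {l : PLab Pm} {B : MBPForm Pm} {s w : M.F.S}
    (h : s ∈ M.val (l.box B)) (hc : PLabCond l (M.F.R s w)) : w ∈ M.val B := by
  cases l with
  | eq α hα h0 => exact h w hc
  | o α hα h1 => exact h w hc
  | c0 => exact h w

lemma get_sizeOf : ∀ (ts : PNSeqs Pm) (i : ℕ) (l : PLab Pm) (v : PNSeq Pm),
    PNSeqs.get ts i = some (l, v) → sizeOf v < sizeOf ts
  | .nil, i, l, v, h => by simp [PNSeqs.get] at h
  | .cons l' t ts, 0, l, v, h => by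
      obtain ⟨rfl, rfl⟩ : l' = l ∧ t = v := by simpa [PNSeqs.get] using h
      simp
      omega
  | .cons l' t ts, i + 1, l, v, h => by
      have h1 := get_sizeOf ts i l v h
      have h2 : sizeOf ts < sizeOf (PNSeqs.cons l' t ts) := by simp
      omega

lemma sizeOf_children {Γ Δ : Finset (MBPForm Pm)} {ts : PNSeqs Pm} :
    sizeOf ts < sizeOf (PNSeq.node Γ Δ ts) := by simp

/-- From a countermodel world for `τ(u)`, build a falsifying embedding. -/
lemma lemB (M : MBPRealization Pm) :
    ∀ (n : ℕ) (u : PNSeq Pm), sizeOf u ≤ n → ∀ s : M.F.S, s ∉ M.val u.tau →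
      ∃ E : List ℕ → M.F.S, E [] = s ∧ PIsEmb M u E ∧ PFalseUnder M u E := by
  intro n
  induction n with
  | zero =>
      intro u hu
      exfalso
      cases u with
      | node Γ Δ ts => simp at hu
  | succ n ih =>
      intro u hu s hs
      cases u with
      | node Γ Δ ts =>
        rw [show M.val (PNSeq.node Γ Δ ts).tau
            = (PNSeqs.tauAux (pseqForm Γ Δ) ts).valR M.F.R M.V by rw [PNSeq.tau]; rfl] at hs
        rw [mem_tauAux] at hs
        push_neg at hs
        obtain ⟨hs1, hs2⟩ := hs
        have key : ∀ i : ℕ, ∃ E : List ℕ → M.F.S, ∀ l v, PNSeqs.get ts i = some (l, v) →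
            PLabCond l (M.F.R s (E [])) ∧ PIsEmb M v E ∧ PFalseUnder M v E := by
          intro i
          by_cases hi : ∃ l v, PNSeqs.get ts i = some (l, v)
          · obtain ⟨l, v, hget⟩ := hi
            have hnb : s ∉ M.val (l.box v.tau) := hs2 i l v hget
            obtain ⟨w, hw1, hw2⟩ := box_false hnb
            have hvsz : sizeOf v ≤ n := by
              have h1 := get_sizeOf ts i l v hget
              have h2 : sizeOf ts < sizeOf (PNSeq.node Γ Δ ts) := sizeOf_children
              omega
            obtain ⟨E, hE0, hEmb, hFalse⟩ := ih v hvsz w hw2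
            refine ⟨E, ?_⟩
            intro l' v' hget'
            rw [hget] at hget'
            obtain ⟨rfl, rfl⟩ : l = l' ∧ v = v' := by
              simpa using hget'
            exact ⟨by rw [hE0]; exact hw1, hEmb, hFalse⟩
          · exact ⟨fun _ => s, fun l v hget => absurd ⟨l, v, hget⟩ hi⟩
        choose F hF using key
        refine ⟨fun p => match p with | [] => s | i :: q => F i q, rfl, ?_, ?_⟩
        · -- PIsEmb
          intro p Γ' Δ' ts' i l v hsub hget
          cases hsub with
          | here => exact (hF i l v hget).1
          | there hj hsub' => exact (hF _ _ _ hj).2.1 _ Γ' Δ' ts' i l v hsub' hget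
        · -- PFalseUnder
          intro p Γ' Δ' ts' hsub
          cases hsub with
          | here =>
              rw [mem_pseqForm] at hs1
              push_neg at hs1
              exact hs1
          | there hj hsub' => exact (hF _ _ _ hj).2.2 _ Γ' Δ' ts' hsub'

/-- Completeness-direction key lemma: a falsifying embedding refutes `τ`. -/
lemma lemC (M : MBPRealization Pm) :
    ∀ (n : ℕ) (u : PNSeq Pm), sizeOf u ≤ n → ∀ (p : List ℕ) (E : List ℕ → M.F.S),
      (∀ q Γ Δ ts i l v, PSubAt u q (.node Γ Δ ts) → PNSeqs.get ts i = some (l, v) →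
          PLabCond l (M.F.R (E (p ++ q)) (E (p ++ q ++ [i])))) →
      (∀ q Γ Δ ts, PSubAt u q (.node Γ Δ ts) →
          (∀ A ∈ Γ, E (p ++ q) ∈ M.val A) ∧ (∀ A ∈ Δ, E (p ++ q) ∉ M.val A)) →
      E p ∉ M.val u.tau := by
  intro n
  induction n with
  | zero =>
      intro u hu
      exfalso
      cases u with
      | node Γ Δ ts => simp at hu
  | succ n ih =>
      intro u hu p E hEmb hFalse hmem
      cases u with
      | node Γ Δ ts =>
        rw [show M.val (PNSeq.node Γ Δ ts).tau
            = (PNSeqs.tauAux (pseqForm Γ Δ) ts).valR M.F.R M.V by rw [PNSeq.tau]; rfl] at hmem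
        rw [mem_tauAux] at hmem
        rcases hmem with hmem | ⟨i, l, v, hget, hbox⟩
        · have hf := hFalse [] Γ Δ ts (PSubAt.here _)
          rw [List.append_nil] at hf
          rw [mem_pseqForm] at hmem
          obtain ⟨A, hA, hAs⟩ := hmem hf.1
          exact hf.2 A hA hAs
        · have hcond := hEmb [] Γ Δ ts i l v (PSubAt.here _) hget
          rw [List.append_nil] at hcond
          have hv : E (p ++ [i]) ∈ M.val v.tau := box_true hbox hcond
          refine ih v ?_ (p ++ [i]) E ?_ ?_ hv
          · have h1 := get_sizeOf ts i l v hget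
            have h2 : sizeOf ts < sizeOf (PNSeq.node Γ Δ ts) := sizeOf_children
            omega
          · intro q Γ' Δ' ts' i' l' v' hsub hget'
            have h := hEmb (i :: q) Γ' Δ' ts' i' l' v' (PSubAt.there hget hsub) hget'
            rw [List.append_cons] at h
            exact h
          · intro q Γ' Δ' ts' hsub
            have h := hFalse (i :: q) Γ' Δ' ts' (PSubAt.there hget hsub)
            rw [List.append_cons] at h
            exact h

end Aux

/-- A nested-sequent of MB+ is valid iff the MB+-formula
`τ` of it is valid. -/
theorem pnsValid_iff_tau_valid {Pm : MBParams} (t : PNSeq Pm) :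
    PNSValid t ↔ MBPValid t.tau := by
  constructor
  · intro hv M s
    by_contra hs
    obtain ⟨E, _hE0, hEmb, hF⟩ := lemB M (sizeOf t) t le_rfl s hs
    exact hv M E hEmb hF
  · intro hv M E hEmb hF
    exact lemC M (sizeOf t) t le_rfl [] E
      (fun q Γ Δ ts i l v hs hg => hEmb q Γ Δ ts i l v hs hg)
      (fun q Γ Δ ts hs => hF q Γ Δ ts hs) (hv M (E []))

end MBQL
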